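/- Let (S, σ) be a tree complex. Then the face structure S* = (S*_i, γ, δ), with S*_i = S_{i+1} ◁_{σ_i} S_i, γ(p) = sup(lvs(p)°), δ(p) = cvr(lvs(p)°), is a positive opetope: it satisfies globularity, strictness, disjointness and pencil linearity, and has exactly one maximal face in each dimension up to dim(S). -/

import Mathlib

/-- A positive hypergraph: graded faces with codomain functions `γ` and (total) domain
relations `δ`. -/
structure PreOpetope where
  P : ℕ → Type
  γ : ∀ k, P (k+1) → P k
  δ : ∀ k, P (k+1) → Set (P k)

namespace PreOpetope

/-- The lower order `<⁻` on `P (k+1)`: transitive closure of `γ a ∈ δ b`. -/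
def ltm (O : PreOpetope) (k : ℕ) : O.P (k+1) → O.P (k+1) → Prop :=
  Relation.TransGen (fun a b => O.γ k a ∈ O.δ k b)

/-- The lower order in every dimension (empty in dimension `0`). -/
def ltmAll (O : PreOpetope) : ∀ k, O.P k → O.P k → Prop
  | 0 => fun _ _ => False
  | (k+1) => O.ltm k

/-- The upper order `<⁺` on `P k`: transitive closure of
`∃ c, a ∈ δ c ∧ γ c = b`. -/
def ltp (O : PreOpetope) (k : ℕ) : O.P k → O.P k → Prop :=
  Relation.TransGen (fun a b => ∃ c : O.P (k+1), a ∈ O.δ k c ∧ O.γ k c = b)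

/-- `O` is a positive opetope: a finite positive hypergraph satisfying globularity,
strictness, disjointness and pencil linearity, with at most one maximal face
(`P_l − δ(P_{l+1})`) in every dimension. -/
structure IsOpetope (O : PreOpetope) : Prop where
  fin : ∀ k, Finite (O.P k)
  bounded : ∃ n, ∀ k, n < k → IsEmpty (O.P k)
  ne : Nonempty (O.P 0)
  pos : ∀ k (a : O.P (k+1)), (O.δ k a).Nonempty
  δzero : ∀ a : O.P 1, ∃! x, x ∈ O.δ 0 a
  glob_γ : ∀ k (a : O.P (k+2)),
    {x : O.P k | x = O.γ k (O.γ (k+1) a)} =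
      {x | ∃ b ∈ O.δ (k+1) a, O.γ k b = x} \ {x | ∃ b ∈ O.δ (k+1) a, x ∈ O.δ k b}
  glob_δ : ∀ k (a : O.P (k+2)),
    O.δ k (O.γ (k+1) a) =
      {x | ∃ b ∈ O.δ (k+1) a, x ∈ O.δ k b} \ {x | ∃ b ∈ O.δ (k+1) a, O.γ k b = x}
  strict : ∀ k (a : O.P k), ¬ O.ltp k a a
  strict0 : ∀ a b : O.P 0, a = b ∨ O.ltp 0 a b ∨ O.ltp 0 b a
  disj : ∀ k (a b : O.P (k+1)),
    ¬ ((O.ltm k a b ∨ O.ltm k b a) ∧ (O.ltp (k+1) a b ∨ O.ltp (k+1) b a))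
  pencil_γ : ∀ k (a b : O.P (k+1)), O.γ k a = O.γ k b →
    a = b ∨ O.ltp (k+1) a b ∨ O.ltp (k+1) b a
  pencil_δ : ∀ k (x : O.P k) (a b : O.P (k+1)), x ∈ O.δ k a → x ∈ O.δ k b →
    a = b ∨ O.ltp (k+1) a b ∨ O.ltp (k+1) b a
  size : ∀ k (a b : O.P k), (¬ ∃ c : O.P (k+1), a ∈ O.δ k c) →
    (¬ ∃ c : O.P (k+1), b ∈ O.δ k c) → a = b

end PreOpetope

/-- The constellation order on `S₁ ⊔ S₀` (`inl` = inner nodes/circles from `S₁`,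
`inr` = vertices/leaves from `S₀`), relative to a relation `r` on `S₁` and a
constellation map `σ : S₁ → St(S₀)`. -/
def coRel {α β : Type*} (r : α → α → Prop) (σ : α → Set β) : α ⊕ β → α ⊕ β → Prop
  | Sum.inl s, Sum.inl t => r s t
  | Sum.inr s, Sum.inl t => s ∈ σ t
  | Sum.inr s, Sum.inr t => s = t
  | Sum.inl _, Sum.inr _ => False

/-- A tree complex: a sequence of trees `S i` (empty above the dimension `n`, singletons
in dimensions `0` and `n`) together with a sequence of constellations
`σ i : S (i+1) → St(S i)`. -/
structure TreeComplex where
  n : ℕ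
  S : ℕ → Type
  le : ∀ i, S i → S i → Prop
  σ : ∀ i, S (i+1) → Set (S i)
  refl : ∀ i (x : S i), le i x x
  trans : ∀ i (x y z : S i), le i x y → le i y z → le i x z
  antisymm : ∀ i (x y : S i), le i x y → le i y x → x = y
  fin : ∀ i, Finite (S i)
  nonemp : ∀ i, i ≤ n → Nonempty (S i)
  empty : ∀ i, n < i → IsEmpty (S i)
  sups : ∀ i, i ≤ n → ∀ a b : S i,
    ∃ c, le i a c ∧ le i b c ∧ ∀ d, le i a d → le i b d → le i c d
  comp : ∀ i (x a b : S i), le i x a → le i x b → le i a b ∨ le i b a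
  zero_sub : ∀ a b : S 0, a = b
  top_sub : ∀ a b : S n, a = b
  σ_convex : ∀ i (p : S (i+1)),
    (∃ m ∈ σ i p, ∀ x ∈ σ i p, le i x m) ∧
    ∀ x ∈ σ i p, ∀ x' ∈ σ i p, ∀ s, le i x s → le i s x' → s ∈ σ i p
  σ_mono : ∀ i (p q : S (i+1)), le (i+1) p q → σ i p ⊆ σ i q
  σ_top : ∀ i (m : S (i+1)), (∀ x, le (i+1) x m) → σ i m = Set.univ
  σ_comp : ∀ i (p q : S (i+1)), (σ i p ∩ σ i q).Nonempty →
    le (i+1) p q ∨ le (i+1) q p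

namespace TreeComplex

variable (T : TreeComplex)

/-- The constellation order on `S*_i = S_{i+1} ◁ S_i`. -/
def coStar (i : ℕ) : (T.S (i+1) ⊕ T.S i) → (T.S (i+1) ⊕ T.S i) → Prop :=
  coRel (T.le (i+1)) (T.σ i)

/-- `lvs(p)°`: the set of leaves of `S*_{i+1}` below `p`, regarded as circles in
`S*_i`. -/
def lvsC (i : ℕ) (p : T.S (i+2) ⊕ T.S (i+1)) : Set (T.S (i+1) ⊕ T.S i) :=
  {x | ∃ t : T.S (i+1), x = Sum.inl t ∧ T.coStar (i+1) (Sum.inr t) p}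

/-- The immediate-predecessor (cover) relation of the constellation order on `S*_i`. -/
def covC (i : ℕ) (x y : T.S (i+1) ⊕ T.S i) : Prop :=
  T.coStar i x y ∧ x ≠ y ∧
    ∀ z, T.coStar i x z → T.coStar i z y → z = x ∨ z = y

/-- The domain `δ(p) = cvr(lvs(p)°)` in `S*_i`. -/
def δStar (i : ℕ) (p : T.S (i+2) ⊕ T.S (i+1)) : Set (T.S (i+1) ⊕ T.S i) :=
  {s | s ∉ T.lvsC i p ∧ ∃ x ∈ T.lvsC i p, T.covC i s x}

/-- `g` is the codomain `γ(p) = sup(lvs(p)°)` of `p`: the least upper bound in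
`(S*_i, ≤^co)` of the set `lvs(p)°`. -/
def IsGammaOf (i : ℕ) (p : T.S (i+2) ⊕ T.S (i+1)) (g : T.S (i+1) ⊕ T.S i) : Prop :=
  (∀ x ∈ T.lvsC i p, T.coStar i x g) ∧
    ∀ u, (∀ x ∈ T.lvsC i p, T.coStar i x u) → T.coStar i g u

end TreeComplex

section Aux

open Sum

/-- In a finite type, every nonempty set has a maximal element w.r.t. a
reflexive-transitive-antisymmetric relation. -/
lemma exists_maximal_rel {α : Type} [Finite α] (le : α → α → Prop)
    (hrefl : ∀ x, le x x) (htrans : ∀ x y z, le x y → le y z → le x z)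
    (hanti : ∀ x y, le x y → le y x → x = y)
    (s : Set α) (hs : s.Nonempty) :
    ∃ m ∈ s, ∀ x ∈ s, le m x → m = x := by
  letI : Preorder α :=
    { le := le, le_refl := hrefl, le_trans := fun a b c => htrans a b c }
  have hfin : s.Finite := Set.toFinite s
  obtain ⟨x, hx⟩ := hs
  obtain ⟨m, hm, hmax⟩ := Finset.exists_maximal (s := hfin.toFinset) ⟨x, hfin.mem_toFinset.2 hx⟩
  refine ⟨m, hfin.mem_toFinset.1 hm, fun y hy hle => ?_⟩
  by_contra hne
  exact hne (hanti _ _ hle (hmax (hfin.mem_toFinset.2 hy) hle))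

lemma exists_minimal_rel {α : Type} [Finite α] (le : α → α → Prop)
    (hrefl : ∀ x, le x x) (htrans : ∀ x y z, le x y → le y z → le x z)
    (hanti : ∀ x y, le x y → le y x → x = y)
    (s : Set α) (hs : s.Nonempty) :
    ∃ m ∈ s, ∀ x ∈ s, le x m → x = m := by
  obtain ⟨m, hm, hmax⟩ := exists_maximal_rel (fun x y => le y x) hrefl
    (fun a b c h1 h2 => htrans c b a h2 h1) (fun a b h1 h2 => (hanti b a h1 h2).symm) s hs
  exact ⟨m, hm, fun x hx h => (hmax x hx h).symm⟩

namespace TreeComplex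

variable (T : TreeComplex)

lemma finP (i : ℕ) : Finite (T.S (i+1) ⊕ T.S i) := by
  haveI := T.fin (i+1); haveI := T.fin i; infer_instance

@[simp] lemma coStar_inl_inl (i : ℕ) (a b : T.S (i+1)) :
    T.coStar i (inl a) (inl b) ↔ T.le (i+1) a b := Iff.rfl

@[simp] lemma coStar_inr_inl (i : ℕ) (a : T.S i) (b : T.S (i+1)) :
    T.coStar i (inr a) (inl b) ↔ a ∈ T.σ i b := Iff.rfl

@[simp] lemma coStar_inr_inr (i : ℕ) (a b : T.S i) :
    T.coStar i (inr a) (inr b) ↔ a = b := Iff.rfl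

@[simp] lemma coStar_inl_inr (i : ℕ) (a : T.S (i+1)) (b : T.S i) :
    T.coStar i (inl a) (inr b) ↔ False := Iff.rfl

lemma co_refl (i : ℕ) (x : T.S (i+1) ⊕ T.S i) : T.coStar i x x := by
  cases x with
  | inl a => exact T.refl _ a
  | inr a => exact rfl

lemma co_trans (i : ℕ) {x y z : T.S (i+1) ⊕ T.S i}
    (h1 : T.coStar i x y) (h2 : T.coStar i y z) : T.coStar i x z := by
  cases x with
  | inl a => cases y with
    | inl b => cases z with
      | inl c => exact T.trans _ a b c h1 h2
      | inr c => exact h2.elim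
    | inr b => exact h1.elim
  | inr a => cases y with
    | inl b => cases z with
      | inl c => exact T.σ_mono i b c h2 h1
      | inr c => exact h2.elim
    | inr b => cases z with
      | inl c => exact (coStar_inr_inr T i a b).1 h1 ▸ h2
      | inr c => exact h1.trans h2

lemma co_antisymm (i : ℕ) {x y : T.S (i+1) ⊕ T.S i}
    (h1 : T.coStar i x y) (h2 : T.coStar i y x) : x = y := by
  cases x with
  | inl a => cases y with
    | inl b => exact congrArg inl (T.antisymm _ a b h1 h2)
    | inr b => exact h1.elim
  | inr a => cases y with
    | inl b => exact h2.elim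
    | inr b => exact congrArg inr h1

/-- The tree property of the constellation order. -/
lemma co_tree (i : ℕ) {x a b : T.S (i+1) ⊕ T.S i}
    (h1 : T.coStar i x a) (h2 : T.coStar i x b) :
    T.coStar i a b ∨ T.coStar i b a := by
  cases x with
  | inl c => cases a with
    | inl a0 => cases b with
      | inl b0 => exact T.comp _ c a0 b0 h1 h2
      | inr b0 => exact h2.elim
    | inr a0 => exact h1.elim
  | inr v => cases a with
    | inl a0 => cases b with
      | inl b0 => exact T.σ_comp i a0 b0 ⟨v, h1, h2⟩
      | inr b0 => exact Or.inr (h2 ▸ h1)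
    | inr a0 => cases b with
      | inl b0 => exact Or.inl (h1 ▸ h2)
      | inr b0 => exact Or.inl ((h1 ▸ h2 : (a0 : T.S i) = b0))

end TreeComplex

end Aux
section Aux2

open Sum

namespace TreeComplex

variable (T : TreeComplex)

lemma lvs_inr (i : ℕ) (t : T.S (i+1)) : T.lvsC i (inr t) = {inl t} := by
  ext x
  constructor
  · rintro ⟨t', rfl, h⟩
    have : t' = t := h
    simp [this]
  · rintro rfl
    exact ⟨t, rfl, rfl⟩

lemma lvs_inl_mem (i : ℕ) (r : T.S (i+2)) (t : T.S (i+1)) :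
    inl t ∈ T.lvsC i (inl r) ↔ t ∈ T.σ (i+1) r := by
  constructor
  · rintro ⟨t', ht', h⟩
    cases ht'; exact h
  · intro h; exact ⟨t, rfl, h⟩

lemma lvs_shape (i : ℕ) {p : T.S (i+2) ⊕ T.S (i+1)} {x : T.S (i+1) ⊕ T.S i}
    (hx : x ∈ T.lvsC i p) : ∃ t, x = inl t := by
  obtain ⟨t, rfl, -⟩ := hx; exact ⟨t, rfl⟩

/-- `lvs p` has a maximum. -/
lemma lvs_max (i : ℕ) (p : T.S (i+2) ⊕ T.S (i+1)) :
    ∃ m ∈ T.lvsC i p, ∀ x ∈ T.lvsC i p, T.coStar i x m := by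
  cases p with
  | inl r =>
    obtain ⟨⟨m, hm, hmax⟩, -⟩ := T.σ_convex (i+1) r
    refine ⟨inl m, (T.lvs_inl_mem i r m).2 hm, ?_⟩
    rintro x ⟨t, rfl, ht⟩
    exact hmax t ht
  | inr t =>
    refine ⟨inl t, ?_, ?_⟩
    · rw [T.lvs_inr]; rfl
    · intro x hx
      rw [T.lvs_inr] at hx
      rw [hx]; exact T.co_refl i _

lemma lvs_nonempty (i : ℕ) (p : T.S (i+2) ⊕ T.S (i+1)) : (T.lvsC i p).Nonempty := by
  obtain ⟨m, hm, -⟩ := T.lvs_max i p; exact ⟨m, hm⟩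

lemma lvs_convex (i : ℕ) (p : T.S (i+2) ⊕ T.S (i+1)) {x y z : T.S (i+1) ⊕ T.S i}
    (hx : x ∈ T.lvsC i p) (hy : y ∈ T.lvsC i p)
    (h1 : T.coStar i x z) (h2 : T.coStar i z y) : z ∈ T.lvsC i p := by
  obtain ⟨a, rfl, ha⟩ := hx
  obtain ⟨b, rfl, hb⟩ := hy
  cases z with
  | inr c => exact h1.elim
  | inl c =>
    cases p with
    | inl r =>
      exact ⟨c, rfl, (T.σ_convex (i+1) r).2 a ha b hb c h1 h2⟩
    | inr t =>
      have hac : T.le (i+1) a c := h1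
      have hcb : T.le (i+1) c b := h2
      have hat : a = t := ha
      have hbt : b = t := hb
      exact ⟨c, rfl, T.antisymm _ c t (hbt ▸ hcb) (hat ▸ hac)⟩

lemma lvs_mono (i : ℕ) {p q : T.S (i+2) ⊕ T.S (i+1)}
    (h : T.coStar (i+1) p q) : T.lvsC i p ⊆ T.lvsC i q := by
  rintro x ⟨t, rfl, ht⟩
  exact ⟨t, rfl, T.co_trans (i+1) ht h⟩

lemma lvs_comp (i : ℕ) {p q : T.S (i+2) ⊕ T.S (i+1)}
    (h : (T.lvsC i p ∩ T.lvsC i q).Nonempty) :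
    T.coStar (i+1) p q ∨ T.coStar (i+1) q p := by
  obtain ⟨x, hp, hq⟩ := h
  obtain ⟨t, rfl, ht⟩ := hp
  obtain ⟨t', ht', ht'q⟩ := hq
  cases ht'
  exact T.co_tree (i+1) ht ht'q

variable {γf : ∀ i, T.S (i+2) ⊕ T.S (i+1) → T.S (i+1) ⊕ T.S i}

/-- The sup of `lvs p` is its maximum. -/
lemma γ_mem (hγ : ∀ i p, T.IsGammaOf i p (γf i p)) (i : ℕ) (p : T.S (i+2) ⊕ T.S (i+1)) : γf i p ∈ T.lvsC i p := by
  obtain ⟨m, hm, hmax⟩ := T.lvs_max i p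
  have h1 : T.coStar i (γf i p) m := (hγ i p).2 m hmax
  have h2 : T.coStar i m (γf i p) := (hγ i p).1 m hm
  rwa [T.co_antisymm i h1 h2]

lemma γ_ub (hγ : ∀ i p, T.IsGammaOf i p (γf i p)) (i : ℕ) (p : T.S (i+2) ⊕ T.S (i+1)) :
    ∀ x ∈ T.lvsC i p, T.coStar i x (γf i p) := (hγ i p).1

lemma γ_unique (hγ : ∀ i p, T.IsGammaOf i p (γf i p)) (i : ℕ) (p : T.S (i+2) ⊕ T.S (i+1)) {g : T.S (i+1) ⊕ T.S i}
    (hmem : g ∈ T.lvsC i p) (hub : ∀ x ∈ T.lvsC i p, T.coStar i x g) :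
    γf i p = g :=
  T.co_antisymm i ((hγ i p).2 g hub) ((hγ i p).1 g hmem)

lemma γ_inr (hγ : ∀ i p, T.IsGammaOf i p (γf i p)) (i : ℕ) (t : T.S (i+1)) : γf i (inr t) = inl t := by
  refine T.γ_unique hγ i (inr t) ?_ ?_
  · rw [T.lvs_inr]; rfl
  · intro x hx; rw [T.lvs_inr] at hx; rw [hx]; exact T.co_refl i _

end TreeComplex

end Aux2
section Aux3

open Sum

namespace TreeComplex

variable (T : TreeComplex)

/-- Going up by one cover step. -/
lemma cov_up (i : ℕ) {x y : T.S (i+1) ⊕ T.S i}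
    (hxy : T.coStar i x y) (hne : x ≠ y) :
    ∃ z, T.covC i x z ∧ T.coStar i z y := by
  haveI := T.finP i
  obtain ⟨z, ⟨hxz, hzy, hzx⟩, hmin⟩ :=
    exists_minimal_rel (T.coStar i) (T.co_refl i)
      (fun a b c h1 h2 => T.co_trans i h1 h2) (fun a b h1 h2 => T.co_antisymm i h1 h2)
      {z | T.coStar i x z ∧ T.coStar i z y ∧ z ≠ x}
      ⟨y, hxy, T.co_refl i y, Ne.symm hne⟩
  refine ⟨z, ⟨hxz, fun h => hzx h.symm, ?_⟩, hzy⟩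
  intro u hxu huz
  by_cases hu : u = x
  · exact Or.inl hu
  · exact Or.inr (hmin u ⟨hxu, T.co_trans i huz hzy, hu⟩ huz)

/-- Crossing the border of a set `M` from outside: there is a cover step into `M`. -/
lemma border (i : ℕ) (M : Set (T.S (i+1) ⊕ T.S i)) {x m : T.S (i+1) ⊕ T.S i}
    (hm : m ∈ M) (hxm : T.coStar i x m) (hx : x ∉ M) :
    ∃ b w, b ∉ M ∧ w ∈ M ∧ T.covC i b w ∧ T.coStar i x b ∧
      T.coStar i b m ∧ T.coStar i w m := by
  haveI := T.finP i
  obtain ⟨b, ⟨hxb, hbm, hbM⟩, hmax⟩ :=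
    exists_maximal_rel (T.coStar i) (T.co_refl i)
      (fun a b c h1 h2 => T.co_trans i h1 h2) (fun a b h1 h2 => T.co_antisymm i h1 h2)
      {t | T.coStar i x t ∧ T.coStar i t m ∧ t ∉ M}
      ⟨x, T.co_refl i x, hxm, hx⟩
  have hbne : b ≠ m := fun h => hbM (h ▸ hm)
  obtain ⟨w, hcov, hwm⟩ := T.cov_up i hbm hbne
  have hwM : w ∈ M := by
    by_contra hwM
    exact hcov.2.1 (hmax w ⟨T.co_trans i hxb hcov.1, hwm, hwM⟩ hcov.1)
  exact ⟨b, w, hbM, hwM, hcov, hxb, hbm, hwm⟩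

/-- Leaves appear first at a cover of the circle: if `y ∈ lvs(inl r)` then `y` is
already a leaf of some cover of `inl r`. -/
lemma lvs_step (i : ℕ) (r : T.S (i+2)) {y : T.S (i+1) ⊕ T.S i}
    (hy : y ∈ T.lvsC i (inl r)) :
    ∃ b, T.covC (i+1) b (inl r) ∧ y ∈ T.lvsC i b := by
  obtain ⟨v, rfl, hv⟩ := hy
  have hv' : v ∈ T.σ (i+1) r := hv
  haveI := T.fin (i+2)
  obtain ⟨r₀, ⟨hr₀v, hr₀r⟩, hmin⟩ :=
    exists_minimal_rel (T.le (i+2)) (T.refl (i+2))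
      (fun a b c h1 h2 => T.trans _ a b c h1 h2) (fun a b h1 h2 => T.antisymm _ a b h1 h2)
      {r' | v ∈ T.σ (i+1) r' ∧ T.le (i+2) r' r} ⟨r, hv', T.refl _ r⟩
  -- r₀ is a minimum of that set
  have hmin' : ∀ w, v ∈ T.σ (i+1) w → T.le (i+2) w r → T.le (i+2) r₀ w := by
    intro w hw hwr
    rcases T.σ_comp (i+1) w r₀ ⟨v, hw, hr₀v⟩ with h | h
    · exact (hmin w ⟨hw, hwr⟩ h) ▸ T.refl _ r₀
    · exact h
  by_cases hr : r₀ = r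
  · -- `v` appears first at `r`: `inr v` is a cover of `inl r`
    refine ⟨inr v, ⟨hv', by simp, ?_⟩, ⟨v, rfl, rfl⟩⟩
    intro z h1 h2
    cases z with
    | inr w => exact Or.inl (congrArg inr h1.symm)
    | inl w =>
      refine Or.inr (congrArg inl ?_)
      exact T.antisymm _ w r h2 (hr ▸ hmin' w h1 h2)
  · -- otherwise `v` is a leaf of a circle-cover `inl u` of `inl r`
    haveI := T.fin (i+2)
    obtain ⟨u, ⟨hru, hur, hune⟩, hmax⟩ :=
      exists_maximal_rel (T.le (i+2)) (T.refl (i+2))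
        (fun a b c h1 h2 => T.trans _ a b c h1 h2) (fun a b h1 h2 => T.antisymm _ a b h1 h2)
        {u | T.le (i+2) r₀ u ∧ T.le (i+2) u r ∧ u ≠ r} ⟨r₀, T.refl _ r₀, hr₀r, hr⟩
    refine ⟨inl u, ⟨hur, by simp [hune], ?_⟩, ⟨v, rfl, T.σ_mono (i+1) r₀ u hru hr₀v⟩⟩
    intro z h1 h2
    cases z with
    | inr w => exact (h1 : False).elim
    | inl w =>
      by_cases hw : w = r
      · exact Or.inr (congrArg inl hw)
      · exact Or.inl (congrArg inl (hmax w ⟨T.trans _ r₀ u w hru h1, h2, hw⟩ h1).symm)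

variable {γf : ∀ i, T.S (i+2) ⊕ T.S (i+1) → T.S (i+1) ⊕ T.S i}

/-- First appearance: every leaf of `γ(a)` is a leaf of some element of `δ(a)`. -/
lemma first_app (hγ : ∀ i p, T.IsGammaOf i p (γf i p)) (i : ℕ)
    (a : T.S (i+3) ⊕ T.S (i+2)) {y : T.S (i+1) ⊕ T.S i}
    (hy : y ∈ T.lvsC i (γf (i+1) a)) :
    ∃ b ∈ T.δStar (i+1) a, y ∈ T.lvsC i b := by
  haveI := T.finP (i+1)
  set m := γf (i+1) a with hm
  have hmM : m ∈ T.lvsC (i+1) a := T.γ_mem hγ (i+1) a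
  obtain ⟨t, ⟨hyt, htm⟩, hmin⟩ :=
    exists_minimal_rel (T.coStar (i+1)) (T.co_refl (i+1))
      (fun a b c h1 h2 => T.co_trans _ h1 h2) (fun a b h1 h2 => T.co_antisymm _ h1 h2)
      {t | y ∈ T.lvsC i t ∧ T.coStar (i+1) t m} ⟨m, hy, T.co_refl _ m⟩
  have htM : t ∉ T.lvsC (i+1) a := by
    intro htM
    obtain ⟨r, rfl, -⟩ := htM
    obtain ⟨b, hcov, hyb⟩ := T.lvs_step i r hyt
    exact hcov.2.1 (hmin b ⟨hyb, T.co_trans _ hcov.1 htm⟩ hcov.1)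
  obtain ⟨b, w, hbM, hwM, hcov, htb, hbm, hwm⟩ :=
    T.border (i+1) (T.lvsC (i+1) a) hmM htm htM
  exact ⟨b, ⟨hbM, w, hwM, hcov⟩, T.lvs_mono i htb hyt⟩

/-- Elements of `δ a` are below `γ a`, so their leaves are among those of `γ a`. -/
lemma δ_le_γ (hγ : ∀ i p, T.IsGammaOf i p (γf i p)) (i : ℕ)
    {a : T.S (i+3) ⊕ T.S (i+2)} {b : T.S (i+2) ⊕ T.S (i+1)}
    (hb : b ∈ T.δStar (i+1) a) : T.coStar (i+1) b (γf (i+1) a) := by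
  obtain ⟨-, w, hwM, hcov⟩ := hb
  exact T.co_trans _ hcov.1 (T.γ_ub hγ (i+1) a w hwM)

/-- `δ a` is an antichain. -/
lemma δ_antichain (i : ℕ) {a : T.S (i+3) ⊕ T.S (i+2)}
    {b b' : T.S (i+2) ⊕ T.S (i+1)}
    (hb : b ∈ T.δStar (i+1) a) (hb' : b' ∈ T.δStar (i+1) a)
    (hne : b ≠ b') (hle : T.coStar (i+1) b b') : False := by
  obtain ⟨hbM, w, hwM, hcov⟩ := hb
  obtain ⟨hb'M, w', hw'M, hcov'⟩ := hb'
  -- `w` and `b'` are comparable (common lower bound `b`)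
  rcases T.co_tree (i+1) hcov.1 hle with h | h
  · -- w ≤ b' : then w ≤ b' ≤ w', so b' ∈ lvs a by convexity
    exact hb'M (T.lvs_convex (i+1) a hwM hw'M h hcov'.1)
  · -- b' ≤ w : with b ≤ b' ≤ w and b ⋖ w, b' = b or b' = w
    rcases hcov.2.2 b' hle h with h1 | h1
    · exact hne h1.symm
    · exact hb'M (h1 ▸ hwM)

end TreeComplex

end Aux3
section Aux4

open Sum

namespace TreeComplex

variable (T : TreeComplex)

/-- The upper order on `S*_i`, relative to a choice `γf` of sups. -/
def ltpT (γf : ∀ i, T.S (i+2) ⊕ T.S (i+1) → T.S (i+1) ⊕ T.S i) (i : ℕ) :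
    (T.S (i+1) ⊕ T.S i) → (T.S (i+1) ⊕ T.S i) → Prop :=
  Relation.TransGen (fun a b => ∃ c, a ∈ T.δStar i c ∧ γf i c = b)

variable {γf : ∀ i, T.S (i+2) ⊕ T.S (i+1) → T.S (i+1) ⊕ T.S i}

lemma mem_δ_lt (hγ : ∀ i p, T.IsGammaOf i p (γf i p)) (i : ℕ)
    {a : T.S (i+1) ⊕ T.S i} {c : T.S (i+2) ⊕ T.S (i+1)}
    (h : a ∈ T.δStar i c) : T.coStar i a (γf i c) ∧ a ≠ γf i c := by
  obtain ⟨hna, x, hx, hcov⟩ := h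
  have h2 : T.coStar i x (γf i c) := T.γ_ub hγ i c x hx
  refine ⟨T.co_trans i hcov.1 h2, ?_⟩
  rintro rfl
  exact hcov.2.1 (T.co_antisymm i hcov.1 h2)

lemma ltpT_lt (hγ : ∀ i p, T.IsGammaOf i p (γf i p)) (i : ℕ)
    {a b : T.S (i+1) ⊕ T.S i} (h : T.ltpT γf i a b) :
    T.coStar i a b ∧ a ≠ b := by
  induction h with
  | single h =>
    obtain ⟨c, hc, rfl⟩ := h
    exact T.mem_δ_lt hγ i hc
  | tail h1 h2 ih =>
    obtain ⟨c, hc, rfl⟩ := h2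
    obtain ⟨h3, h4⟩ := T.mem_δ_lt hγ i hc
    refine ⟨T.co_trans i ih.1 h3, ?_⟩
    rintro rfl
    exact ih.2 (T.co_antisymm i ih.1 h3)

lemma ltpT_of_lt (hγ : ∀ i p, T.IsGammaOf i p (γf i p)) (i : ℕ)
    {a b : T.S (i+1) ⊕ T.S i} (hab : T.coStar i a b) (hne : a ≠ b) :
    T.ltpT γf i a b := by
  haveI := T.finP i
  suffices H : ∀ n (a : T.S (i+1) ⊕ T.S i),
      {w | T.coStar i a w ∧ a ≠ w ∧ T.coStar i w b}.ncard ≤ n →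
      T.coStar i a b → a ≠ b → T.ltpT γf i a b by
    exact H _ a le_rfl hab hne
  intro n
  induction n with
  | zero =>
    intro a hcard hab hne
    exfalso
    have : 0 < {w | T.coStar i a w ∧ a ≠ w ∧ T.coStar i w b}.ncard :=
      (Set.ncard_pos (Set.toFinite _)).2 ⟨b, hab, hne, T.co_refl i b⟩
    omega
  | succ n ih =>
    intro a hcard hab hne
    obtain ⟨z, hcov, hzb⟩ := T.cov_up i hab hne
    obtain ⟨t, rfl⟩ : ∃ t, z = inl t := by
      cases z with
      | inl t => exact ⟨t, rfl⟩
      | inr v =>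
        exfalso
        cases a with
        | inl w => exact (hcov.1 : False).elim
        | inr w => exact hcov.2.1 (congrArg inr (hcov.1 : w = v))
    have hstep : ∃ c, a ∈ T.δStar i c ∧ γf i c = inl t := by
      refine ⟨inr t, ⟨?_, inl t, ?_, hcov⟩, T.γ_inr hγ i t⟩
      · rw [T.lvs_inr]
        exact hcov.2.1
      · rw [T.lvs_inr]; rfl
    by_cases hzb' : inl t = b
    · exact Relation.TransGen.single (hzb' ▸ hstep)
    · refine Relation.TransGen.head hstep (ih (inl t) ?_ hzb hzb')
      have hsub : {w | T.coStar i (inl t) w ∧ inl t ≠ w ∧ T.coStar i w b} ⊂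
          {w | T.coStar i a w ∧ a ≠ w ∧ T.coStar i w b} := by
        constructor
        · rintro w ⟨h1, h2, h3⟩
          refine ⟨T.co_trans i hcov.1 h1, ?_, h3⟩
          rintro rfl
          exact hcov.2.1 (T.co_antisymm i hcov.1 h1)
        · intro hsup
          have := hsup ⟨hcov.1, hcov.2.1, hzb⟩
          exact this.2.1 rfl
      have := Set.ncard_lt_ncard hsub (Set.toFinite _)
      omega

/-- Globularity for `γ`. -/
lemma glob_γ_aux (hγ : ∀ i p, T.IsGammaOf i p (γf i p)) (i : ℕ)
    (a : T.S (i+3) ⊕ T.S (i+2)) :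
    {x : T.S (i+1) ⊕ T.S i | x = γf i (γf (i+1) a)} =
      {x | ∃ b ∈ T.δStar (i+1) a, γf i b = x} \
        {x | ∃ b ∈ T.δStar (i+1) a, x ∈ T.δStar i b} := by
  set m := γf (i+1) a with hm
  have hlsub : ∀ {b}, b ∈ T.δStar (i+1) a → T.lvsC i b ⊆ T.lvsC i m :=
    fun hb => T.lvs_mono i (T.δ_le_γ hγ i hb)
  ext x
  simp only [Set.mem_setOf_eq, Set.mem_diff]
  constructor
  · rintro rfl
    have hg : γf i m ∈ T.lvsC i m := T.γ_mem hγ i m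
    obtain ⟨b, hb, hgb⟩ := T.first_app hγ i a hg
    refine ⟨⟨b, hb, ?_⟩, ?_⟩
    · refine T.co_antisymm i ?_ ?_
      · exact T.γ_ub hγ i m _ (hlsub hb (T.γ_mem hγ i b))
      · exact T.γ_ub hγ i b _ hgb
    · rintro ⟨b', hb', hgm, x', hx', hcov⟩
      have h1 : T.coStar i x' (γf i m) := T.γ_ub hγ i m x' (hlsub hb' hx')
      exact hcov.2.1 (T.co_antisymm i hcov.1 h1)
  · rintro ⟨⟨b, hb, rfl⟩, hnot⟩
    set x := γf i b with hx
    have hxm : x ∈ T.lvsC i m := hlsub hb (T.γ_mem hγ i b)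
    by_contra hne
    have hxg : T.coStar i x (γf i m) := T.γ_ub hγ i m x hxm
    obtain ⟨y, hcov, hyg⟩ := T.cov_up i hxg hne
    have hym : y ∈ T.lvsC i m :=
      T.lvs_convex i m hxm (T.γ_mem hγ i m) hcov.1 hyg
    obtain ⟨b', hb', hyb'⟩ := T.first_app hγ i a hym
    have hxb' : x ∉ T.lvsC i b' := by
      intro hxb'
      rcases T.lvs_comp i ⟨x, T.γ_mem hγ i b, hxb'⟩ with h | h
      · by_cases hbb : b = b'
        · subst hbb
          exact hcov.2.1 (T.co_antisymm i hcov.1 (T.γ_ub hγ i b y hyb'))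
        · exact T.δ_antichain i hb hb' hbb h
      · by_cases hbb : b' = b
        · subst hbb
          exact hcov.2.1 (T.co_antisymm i hcov.1 (T.γ_ub hγ i b' y hyb'))
        · exact T.δ_antichain i hb' hb hbb h
    exact hnot ⟨b', hb', hxb', y, hyb', hcov⟩

/-- Globularity for `δ`. -/
lemma glob_δ_aux (hγ : ∀ i p, T.IsGammaOf i p (γf i p)) (i : ℕ)
    (a : T.S (i+3) ⊕ T.S (i+2)) :
    T.δStar i (γf (i+1) a) =
      {x | ∃ b ∈ T.δStar (i+1) a, x ∈ T.δStar i b} \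
        {x | ∃ b ∈ T.δStar (i+1) a, γf i b = x} := by
  set m := γf (i+1) a with hm
  have hlsub : ∀ {b}, b ∈ T.δStar (i+1) a → T.lvsC i b ⊆ T.lvsC i m :=
    fun hb => T.lvs_mono i (T.δ_le_γ hγ i hb)
  ext x
  simp only [Set.mem_setOf_eq, Set.mem_diff]
  constructor
  · rintro ⟨hxm, z, hz, hcov⟩
    obtain ⟨b, hb, hzb⟩ := T.first_app hγ i a hz
    refine ⟨⟨b, hb, fun hxb => hxm (hlsub hb hxb), z, hzb, hcov⟩, ?_⟩
    rintro ⟨b', hb', rfl⟩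
    exact hxm (hlsub hb' (T.γ_mem hγ i b'))
  · rintro ⟨⟨b, hb, hxlb, z, hzb, hcov⟩, hnmax⟩
    refine ⟨?_, z, hlsub hb hzb, hcov⟩
    intro hxm
    obtain ⟨b', hb', hxb'⟩ := T.first_app hγ i a hxm
    have hbb : b ≠ b' := fun h => hxlb (h ▸ hxb')
    have hzb' : z ∉ T.lvsC i b' := by
      intro hzb'
      rcases T.lvs_comp i ⟨z, hzb, hzb'⟩ with h | h
      · exact T.δ_antichain i hb hb' hbb h
      · exact T.δ_antichain i hb' hb (Ne.symm hbb) h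
    -- show `x` is the max of `lvs b'`
    have : γf i b' = x := by
      by_contra hne'
      have hxx' : T.coStar i x (γf i b') := T.γ_ub hγ i b' x hxb'
      rcases T.co_tree i hcov.1 hxx' with h | h
      · exact hzb' (T.lvs_convex i b' hxb' (T.γ_mem hγ i b') hcov.1 h)
      · rcases hcov.2.2 (γf i b') hxx' h with h1 | h1
        · exact hne' h1
        · exact hzb' (h1 ▸ T.γ_mem hγ i b')
    exact hnmax ⟨b', hb', this⟩

end TreeComplex

end Aux4
section Aux5

open Sum

namespace TreeComplex

variable (T : TreeComplex)

/-- The lower order on `S*_{i+1}`, relative to `γf`. -/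
def ltmT (γf : ∀ i, T.S (i+2) ⊕ T.S (i+1) → T.S (i+1) ⊕ T.S i) (i : ℕ) :
    (T.S (i+2) ⊕ T.S (i+1)) → (T.S (i+2) ⊕ T.S (i+1)) → Prop :=
  Relation.TransGen (fun a b => γf i a ∈ T.δStar i b)

variable {γf : ∀ i, T.S (i+2) ⊕ T.S (i+1) → T.S (i+1) ⊕ T.S i}

lemma ltm_inv (hγ : ∀ i p, T.IsGammaOf i p (γf i p)) (i : ℕ)
    {a b : T.S (i+2) ⊕ T.S (i+1)} (h : T.ltmT γf i a b) :
    (T.coStar i (γf i a) (γf i b) ∧ γf i a ≠ γf i b) ∧ γf i a ∉ T.lvsC i b := by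
  induction h with
  | @single d h =>
    obtain ⟨hn, x, hx, hcov⟩ := h
    have hxb : T.coStar i x (γf i d) := T.γ_ub hγ i d x hx
    refine ⟨⟨T.co_trans i hcov.1 hxb, ?_⟩, hn⟩
    rintro hEq
    exact hcov.2.1 (T.co_antisymm i hcov.1 (hEq ▸ hxb))
  | @tail c d h1 hstep ih =>
    obtain ⟨hn, x, hx, hcov⟩ := hstep
    have hxb : T.coStar i x (γf i d) := T.γ_ub hγ i d x hx
    have hac : T.coStar i (γf i a) (γf i c) := ih.1.1
    refine ⟨⟨T.co_trans i hac (T.co_trans i hcov.1 hxb), ?_⟩, ?_⟩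
    · rintro hEq
      exact hcov.2.1 (T.co_antisymm i hcov.1 (T.co_trans i hxb (hEq ▸ hac)))
    · intro hmem
      exact hn (T.lvs_convex i d hmem hx hac hcov.1)

lemma disj_aux (hγ : ∀ i p, T.IsGammaOf i p (γf i p)) (i : ℕ)
    {a b : T.S (i+2) ⊕ T.S (i+1)} (hm : T.ltmT γf i a b)
    (hp : T.coStar (i+1) a b ∨ T.coStar (i+1) b a) : False := by
  obtain ⟨⟨h1, h2⟩, h3⟩ := T.ltm_inv hγ i hm
  rcases hp with h | h
  · exact h3 (T.lvs_mono i h (T.γ_mem hγ i a))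
  · have : γf i b ∈ T.lvsC i a := T.lvs_mono i h (T.γ_mem hγ i b)
    exact h2 (T.co_antisymm i h1 (T.γ_ub hγ i a _ this))

lemma pos_aux (i : ℕ) (p : T.S (i+2) ⊕ T.S (i+1)) : (T.δStar i p).Nonempty := by
  haveI := T.finP i
  obtain ⟨x, hx, hmin⟩ :=
    exists_minimal_rel (T.coStar i) (T.co_refl i)
      (fun a b c h1 h2 => T.co_trans i h1 h2) (fun a b h1 h2 => T.co_antisymm i h1 h2)
      (T.lvsC i p) (T.lvs_nonempty i p)
  obtain ⟨t, rfl⟩ := T.lvs_shape i hx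
  obtain ⟨⟨v, hv, -⟩, -⟩ := T.σ_convex i t
  obtain ⟨s, ⟨hs1, hs2⟩, hmax⟩ :=
    exists_maximal_rel (T.coStar i) (T.co_refl i)
      (fun a b c h1 h2 => T.co_trans i h1 h2) (fun a b h1 h2 => T.co_antisymm i h1 h2)
      {s | T.coStar i s (inl t) ∧ s ≠ inl t} ⟨inr v, hv, by simp⟩
  have hcov : T.covC i s (inl t) := by
    refine ⟨hs1, hs2, ?_⟩
    intro z h1 h2
    by_cases hz : z = inl t
    · exact Or.inr hz
    · exact Or.inl (hmax z ⟨h2, hz⟩ h1).symm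
  refine ⟨s, ?_, inl t, hx, hcov⟩
  intro hs
  exact hs2 (hmin s hs hs1)

/-- `S*_0` is a linear order. -/
lemma lin0 (x y : T.S 1 ⊕ T.S 0) : T.coStar 0 x y ∨ T.coStar 0 y x := by
  cases x with
  | inl t =>
    obtain ⟨⟨v, hv, -⟩, -⟩ := T.σ_convex 0 t
    cases y with
    | inl t' =>
      obtain ⟨⟨v', hv', -⟩, -⟩ := T.σ_convex 0 t'
      have : v = v' := T.zero_sub v v'
      exact T.co_tree 0 (x := inr v) hv (this ▸ hv')
    | inr w => exact Or.inr ((T.zero_sub w v) ▸ hv)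
  | inr w =>
    cases y with
    | inl t' =>
      obtain ⟨⟨v', hv', -⟩, -⟩ := T.σ_convex 0 t'
      exact Or.inl ((T.zero_sub w v') ▸ hv')
    | inr w' => exact Or.inl (T.zero_sub w w')

lemma δzero_aux (a : T.S 2 ⊕ T.S 1) : ∃! x, x ∈ T.δStar 0 a := by
  obtain ⟨s, hs⟩ := T.pos_aux 0 a
  refine ⟨s, hs, ?_⟩
  have key : ∀ u u', u ∈ T.δStar 0 a → u' ∈ T.δStar 0 a → T.coStar 0 u u' → u = u' := by
    rintro u u' ⟨hu, x, hx, hc⟩ ⟨hu', x', hx', hc'⟩ huu'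
    by_contra hne
    rcases T.co_tree 0 huu' hc.1 with h | h
    · -- u' ≤ x
      rcases hc.2.2 u' huu' h with h1 | h1
      · exact hne h1.symm
      · exact hu' (h1 ▸ hx)
    · -- x ≤ u'
      exact hu' (T.lvs_convex 0 a hx hx' h hc'.1)
  intro y hy
  rcases T.lin0 y s with h | h
  · exact key y s hy hs h
  · exact (key s y hs hy h).symm

lemma maximal_not_in_δ (i : ℕ) {a : T.S (i+1) ⊕ T.S i}
    (hmax : ∀ y, T.coStar i a y → a = y) : ¬ ∃ c, a ∈ T.δStar i c := by
  rintro ⟨c, -, x, -, hcov⟩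
  exact hcov.2.1 (hmax x hcov.1)

lemma not_in_δ_maximal (i : ℕ) {a : T.S (i+1) ⊕ T.S i}
    (h : ¬ ∃ c, a ∈ T.δStar i c) : ∀ y, T.coStar i a y → a = y := by
  intro y hy
  by_contra hne
  obtain ⟨z, hcov, hzy⟩ := T.cov_up i hy hne
  obtain ⟨t, rfl⟩ : ∃ t, z = inl t := by
    cases z with
    | inl t => exact ⟨t, rfl⟩
    | inr v =>
      exfalso
      cases a with
      | inl w => exact (hcov.1 : False).elim
      | inr w => exact hcov.2.1 (congrArg inr (hcov.1 : w = v))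
  refine h ⟨inr t, ?_, inl t, ?_, hcov⟩
  · rw [T.lvs_inr]; exact hcov.2.1
  · rw [T.lvs_inr]; rfl

lemma size_aux (k : ℕ) (a b : T.S (k+1) ⊕ T.S k)
    (ha : ¬ ∃ c, a ∈ T.δStar k c) (hb : ¬ ∃ c, b ∈ T.δStar k c) : a = b := by
  rcases Nat.lt_or_ge T.n k with h | h
  · exfalso
    cases a with
    | inl r => exact (T.empty (k+1) (Nat.lt_succ_of_lt h)).false r
    | inr x => exact (T.empty k h).false x
  · rcases Nat.eq_or_lt_of_le h with hEq | hlt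
    · -- k = T.n
      cases a with
      | inl r => exact ((T.empty (k+1) (by omega)).false r).elim
      | inr x =>
        cases b with
        | inl r => exact ((T.empty (k+1) (by omega)).false r).elim
        | inr y =>
          subst hEq
          exact congrArg inr (T.top_sub x y)
    · -- k + 1 ≤ T.n : S (k+1) has a top, hence S*_k has a greatest element
      haveI := T.fin (k+1)
      obtain ⟨m₁, -, hmax⟩ :=
        exists_maximal_rel (T.le (k+1)) (T.refl (k+1))
          (fun a b c h1 h2 => T.trans _ a b c h1 h2)
          (fun a b h1 h2 => T.antisymm _ a b h1 h2)
          Set.univ (by haveI := T.nonemp (k+1) hlt; exact Set.univ_nonempty)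
      have htop : ∀ t, T.le (k+1) t m₁ := by
        intro t
        obtain ⟨c, h1, h2, -⟩ := T.sups (k+1) hlt t m₁
        exact (hmax c trivial h2) ▸ h1
      have hσ : T.σ k m₁ = Set.univ := T.σ_top k m₁ htop
      have hgr : ∀ x : T.S (k+1) ⊕ T.S k, T.coStar k x (inl m₁) := by
        intro x
        cases x with
        | inl t => exact htop t
        | inr v => show v ∈ T.σ k m₁; rw [hσ]; trivial
      have h1 := T.not_in_δ_maximal k ha (inl m₁) (hgr a)
      have h2 := T.not_in_δ_maximal k hb (inl m₁) (hgr b)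
      rw [h1, h2]

end TreeComplex

end Aux5
/-- Let `(S, σ)` be a tree complex.  The face structure `S*` with
`S*_i = S_{i+1} ◁ S_i`, codomain `γ(p) = sup(lvs(p)°)` (characterized as the least upper
bound of `lvs(p)°` in the constellation order) and domain `δ(p) = cvr(lvs(p)°)`, is a
positive opetope (it satisfies globularity, strictness, disjointness and pencil
linearity, with at most one maximal face in each dimension), and it has exactly one
maximal face in each dimension up to `dim(S)`. -/
theorem stmt_19 (T : TreeComplex)
    (γf : ∀ i, T.S (i+2) ⊕ T.S (i+1) → T.S (i+1) ⊕ T.S i)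
    (hγ : ∀ i p, T.IsGammaOf i p (γf i p)) :
    PreOpetope.IsOpetope ⟨fun k => T.S (k+1) ⊕ T.S k, γf, fun k => T.δStar k⟩ ∧
    ∀ l, l ≤ T.n → ∃ a : T.S (l+1) ⊕ T.S l, ¬ ∃ c, a ∈ T.δStar l c := by
  constructor
  · refine
      { fin := fun k => T.finP k
        bounded := ⟨T.n, fun k hk => ?_⟩
        ne := ⟨Sum.inr (T.nonemp 0 (Nat.zero_le _)).some⟩
        pos := fun k a => T.pos_aux k a
        δzero := fun a => T.δzero_aux a
        glob_γ := fun k a => T.glob_γ_aux hγ k a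
        glob_δ := fun k a => T.glob_δ_aux hγ k a
        strict := fun k a h => ?_
        strict0 := fun a b => ?_
        disj := fun k a b => ?_
        pencil_γ := fun k a b h => ?_
        pencil_δ := fun k x a b hxa hxb => ?_
        size := fun k a b ha hb => T.size_aux k a b ha hb }
    · -- bounded
      haveI := T.empty (k+1) (by omega)
      haveI := T.empty k hk
      infer_instance
    · -- strict
      have h' : T.ltpT γf k a a := h
      exact (T.ltpT_lt hγ k h').2 rfl
    · -- strict0
      by_cases hab : a = b
      · exact Or.inl hab
      · rcases T.lin0 a b with hc | hc
        · exact Or.inr (Or.inl (T.ltpT_of_lt hγ 0 hc hab))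
        · exact Or.inr (Or.inr (T.ltpT_of_lt hγ 0 hc (Ne.symm hab)))
    · -- disj
      rintro ⟨hm, hp⟩
      have hp' : T.coStar (k+1) a b ∨ T.coStar (k+1) b a := by
        rcases hp with h | h
        · exact Or.inl (T.ltpT_lt hγ (k+1) h).1
        · exact Or.inr (T.ltpT_lt hγ (k+1) h).1
      rcases hm with h | h
      · exact T.disj_aux hγ k h hp'
      · exact T.disj_aux hγ k h hp'.symm
    · -- pencil_γ
      by_cases hab : a = b
      · exact Or.inl hab
      · have h' : γf k a = γf k b := h
        have hmem : γf k a ∈ T.lvsC k b := h'.symm ▸ T.γ_mem hγ k b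
        rcases T.lvs_comp k ⟨γf k a, T.γ_mem hγ k a, hmem⟩ with hc | hc
        · exact Or.inr (Or.inl (T.ltpT_of_lt hγ (k+1) hc hab))
        · exact Or.inr (Or.inr (T.ltpT_of_lt hγ (k+1) hc (Ne.symm hab)))
    · -- pencil_δ
      by_cases hab : a = b
      · exact Or.inl hab
      · have hxa' : x ∈ T.δStar k a := hxa
        have hxb' : x ∈ T.δStar k b := hxb
        obtain ⟨hu, y, hy, hc⟩ := hxa'
        obtain ⟨hu', y', hy', hc'⟩ := hxb'
        have hyy : y = y' := by
          rcases T.co_tree k hc.1 hc'.1 with hcmp | hcmp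
          · rcases hc'.2.2 y hc.1 hcmp with h1 | h1
            · exact absurd h1.symm hc.2.1
            · exact h1
          · rcases hc.2.2 y' hc'.1 hcmp with h1 | h1
            · exact absurd h1.symm hc'.2.1
            · exact h1.symm
        rcases T.lvs_comp k ⟨y, hy, hyy ▸ hy'⟩ with hcmp | hcmp
        · exact Or.inr (Or.inl (T.ltpT_of_lt hγ (k+1) hcmp hab))
        · exact Or.inr (Or.inr (T.ltpT_of_lt hγ (k+1) hcmp (Ne.symm hab)))
  · -- exactly one maximal face in every dimension `l ≤ n`
    intro l hl
    haveI := T.finP l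
    obtain ⟨m, -, hmax⟩ :=
      exists_maximal_rel (T.coStar l) (T.co_refl l)
        (fun a b c h1 h2 => T.co_trans l h1 h2) (fun a b h1 h2 => T.co_antisymm l h1 h2)
        Set.univ ⟨Sum.inr (T.nonemp l hl).some, trivial⟩
    exact ⟨m, T.maximal_not_in_δ l (fun y hy => hmax y trivial hy)⟩
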